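/- For every nonnegative integer n: ∑_{k=0}^n C(n,k)^4 · {1 + 4(n−2k)H_k} = (−1)^n · C(2n,n), i.e. T_n^{(4)} = (−1)^n C(2n,n). -/

import Mathlib

noncomputable def H (m : ℕ) : ℚ := ∑ j ∈ Finset.range m, (1 : ℚ) / (j + 1)

noncomputable def Fq (n k : ℕ) : ℚ :=
  ((n.choose k : ℚ))^(4 : ℕ) * (1 + (4) * ((n : ℚ) - 2*k) * H k)

noncomputable def Gq (n k : ℕ) : ℚ :=
  ((n.choose k : ℚ))^(4 : ℕ) *
    ( ((k:ℚ)^3*(10*(k:ℚ)^3-36*((n:ℚ)+1)*(k:ℚ)^2+45*((n:ℚ)+1)^2*(k:ℚ)-20*((n:ℚ)+1)^3))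
        /(((n:ℚ)+1)*(((n:ℚ)+1-(k:ℚ))^4))
      + (4*(k:ℚ)^4*(2*(k:ℚ)^2-6*((n:ℚ)+1)*(k:ℚ)+5*((n:ℚ)+1)^2))/(((n:ℚ)+1-(k:ℚ))^4) * H k )

noncomputable def Lq (n k : ℕ) : ℚ :=
  ((n:ℚ)+1) * Fq (n+1) k + 2*(2*(n:ℚ)+1) * Fq n k
    + (2*(8*(n:ℚ)+3)/((n:ℚ)+1)) * (((n:ℚ) - 2*(k:ℚ)) * ((n.choose k : ℚ))^(4:ℕ))

lemma H_succ (k : ℕ) : H (k+1) = H k + 1/((k:ℚ)+1) := by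
  simp [H, Finset.sum_range_succ]

set_option maxHeartbeats 4000000 in
lemma poly_step (x y c h : ℚ) (h1 : y+1 ≠ 0) (h2 : x+1 ≠ 0) (h3 : x+1-y ≠ 0) (h4 : x-y ≠ 0) :
              (x + 1) * ((c * (x + 1) / (x + 1 - y)) ^ 4 * (1 + 4 * (x + 1 - 2 * y) * h)) +
                    2 * (2 * x + 1) * (c ^ 4 * (1 + 4 * (x - 2 * y) * h)) +
                  2 * (8 * x + 3) / (x + 1) * ((x - 2 * y) * c ^ 4) =
                (c * (x - y) / (y + 1)) ^ 4 *
                    ((y + 1) ^ 3 *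
                          (10 * (y + 1) ^ 3 - 36 * (x + 1) * (y + 1) ^ 2 + 45 * (x + 1) ^ 2 * (y + 1) -
                            20 * (x + 1) ^ 3) /
                        ((x + 1) * (x + 1 - (y + 1)) ^ 4) +
                      4 * (y + 1) ^ 4 * (2 * (y + 1) ^ 2 - 6 * (x + 1) * (y + 1) + 5 * (x + 1) ^ 2) /
                          (x + 1 - (y + 1)) ^ 4 *
                        (h + 1 / (y + 1))) -
                  c ^ 4 *
                    (y ^ 3 * (10 * y ^ 3 - 36 * (x + 1) * y ^ 2 + 45 * (x + 1) ^ 2 * y - 20 * (x + 1) ^ 3) /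
                        ((x + 1) * (x + 1 - y) ^ 4) +
                      4 * y ^ 4 * (2 * y ^ 2 - 6 * (x + 1) * y + 5 * (x + 1) ^ 2) / (x + 1 - y) ^ 4 * h) := by
  have e : x + 1 - (y + 1) = x - y := by ring
  rw [e]
  field_simp
  ring

lemma step (n k : ℕ) (hk : k < n) : Lq n k = Gq n (k+1) - Gq n k := by
  have hk1 : ((k:ℚ)+1) ≠ 0 := by positivity
  have hn1 : ((n:ℚ)+1) ≠ 0 := by positivity
  have hkn : (k:ℚ) < (n:ℚ) := by exact_mod_cast hk
  have hnk : ((n:ℚ)+1-(k:ℚ)) ≠ 0 := by linarith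
  have hnk2 : ((n:ℚ)-(k:ℚ)) ≠ 0 := by
    have : (0:ℚ) < (n:ℚ)-(k:ℚ) := by linarith
    linarith
  have hb : ((n.choose (k+1) : ℚ)) = (n.choose k : ℚ) * ((n:ℚ)-(k:ℚ)) / ((k:ℚ)+1) := by
    have h := Nat.choose_succ_right_eq n k
    have h' : ((n.choose (k+1) : ℚ)) * ((k:ℚ)+1) = (n.choose k : ℚ) * ((n:ℚ)-(k:ℚ)) := by
      have := congrArg (Nat.cast : ℕ → ℚ) h
      push_cast [Nat.cast_sub hk.le] at this
      linarith [this]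
    field_simp
    linarith [h']
  have hd : (((n+1).choose k : ℚ)) = (n.choose k : ℚ) * ((n:ℚ)+1) / ((n:ℚ)+1-(k:ℚ)) := by
    have h := Nat.choose_mul_succ_eq n k
    have h' : (((n+1).choose k : ℚ)) * ((n:ℚ)+1-(k:ℚ)) = (n.choose k : ℚ) * ((n:ℚ)+1) := by
      have := congrArg (Nat.cast : ℕ → ℚ) h
      have hle : k ≤ n + 1 := by omega
      push_cast [Nat.cast_sub hle] at this
      linarith [this]
    field_simp
    linarith [h']
  simp only [Lq, Fq, Gq, H_succ, hb, hd]
  push_cast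
  exact poly_step (n:ℚ) (k:ℚ) (n.choose k : ℚ) (H k) hk1 hn1 hnk hnk2

lemma Gq_zero (n : ℕ) : Gq n 0 = 0 := by
  simp [Gq, H]

lemma Fq_top (n : ℕ) : Fq n (n+1) = 0 := by
  simp [Fq, Nat.choose_succ_self]

lemma boundary (n : ℕ) : Gq n n + Lq n n + Lq n (n+1) = 0 := by
  have hn1 : ((n:ℚ)+1) ≠ 0 := by positivity
  simp only [Lq, Fq, Gq, H_succ, Nat.choose_self, Nat.choose_succ_self,
    Nat.choose_succ_self_right, Nat.cast_one, Nat.cast_zero]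
  push_cast
  have e : (n:ℚ) + 1 - (n:ℚ) = 1 := by ring
  have e2 : (n:ℚ) + 1 - ((n:ℚ)+1) = 0 := by ring
  rw [e]
  field_simp
  ring

lemma refl_sum (n : ℕ) :
    ∑ k ∈ Finset.range (n+1), (((n:ℚ) - 2*(k:ℚ)) * ((n.choose k : ℚ))^(4:ℕ)) = 0 := by
  have h := Finset.sum_range_reflect
    (fun k => (((n:ℚ) - 2*(k:ℚ)) * ((n.choose k : ℚ))^(4:ℕ))) (n+1)
  simp only [Nat.add_sub_cancel] at h
  have h2 : ∑ j ∈ Finset.range (n+1),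
      (((n:ℚ) - 2*((n-j : ℕ):ℚ)) * ((n.choose (n-j) : ℚ))^(4:ℕ))
      = ∑ j ∈ Finset.range (n+1), -(((n:ℚ) - 2*(j:ℚ)) * ((n.choose j : ℚ))^(4:ℕ)) := by
    refine Finset.sum_congr rfl fun j hj => ?_
    have hj' : j ≤ n := by
      have := Finset.mem_range.mp hj; omega
    rw [Nat.choose_symm hj', Nat.cast_sub hj']
    ring
  rw [h2] at h
  rw [Finset.sum_neg_distrib] at h
  linarith [h]

lemma recurrence (n : ℕ) :
    ((n:ℚ)+1) * (∑ k ∈ Finset.range (n+2), Fq (n+1) k)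
      + 2*(2*(n:ℚ)+1) * (∑ k ∈ Finset.range (n+1), Fq n k) = 0 := by
  have hn1 : ((n:ℚ)+1) ≠ 0 := by positivity
  have key : ∑ k ∈ Finset.range (n+2), Lq n k = 0 := by
    rw [Finset.sum_range_succ, Finset.sum_range_succ]
    have tele : ∑ k ∈ Finset.range n, Lq n k = Gq n n - Gq n 0 := by
      rw [← Finset.sum_range_sub (fun k => Gq n k) n]
      exact Finset.sum_congr rfl fun k hk => step n k (Finset.mem_range.mp hk)
    rw [tele, Gq_zero, sub_zero]
    linarith [boundary n]
  have expand : ∑ k ∈ Finset.range (n+2), Lq n k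
      = ((n:ℚ)+1) * (∑ k ∈ Finset.range (n+2), Fq (n+1) k)
        + 2*(2*(n:ℚ)+1) * (∑ k ∈ Finset.range (n+2), Fq n k)
        + (2*(8*(n:ℚ)+3)/((n:ℚ)+1)) *
            (∑ k ∈ Finset.range (n+2), (((n:ℚ) - 2*(k:ℚ)) * ((n.choose k : ℚ))^(4:ℕ))) := by
    simp only [Lq]
    rw [Finset.sum_add_distrib, Finset.sum_add_distrib, ← Finset.mul_sum, ← Finset.mul_sum,
      ← Finset.mul_sum]
  have hs2 : ∑ k ∈ Finset.range (n+2), Fq n k = ∑ k ∈ Finset.range (n+1), Fq n k := by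
    rw [Finset.sum_range_succ, Fq_top, add_zero]
  have hs3 : ∑ k ∈ Finset.range (n+2), (((n:ℚ) - 2*(k:ℚ)) * ((n.choose k : ℚ))^(4:ℕ)) = 0 := by
    rw [Finset.sum_range_succ, refl_sum, Nat.choose_succ_self]
    norm_num
  rw [expand, hs2, hs3, mul_zero, add_zero] at key
  exact key

lemma main_sum : ∀ n : ℕ, ∑ k ∈ Finset.range (n+1), Fq n k = (-1)^n * ((2*n).choose n : ℚ)
  | 0 => by norm_num [Fq, H]
  | (n+1) => by
    have key := recurrence n
    have ih := main_sum n
    have hn1 : ((n:ℚ)+1) ≠ 0 := by positivity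
    have hQ : ((n:ℚ)+1) * (((2*(n+1)).choose (n+1) : ℕ) : ℚ)
        = 2*(2*(n:ℚ)+1) * (((2*n).choose n : ℕ) : ℚ) := by
      have h := Nat.succ_mul_centralBinom_succ n
      have h' : (n+1) * ((2*(n+1)).choose (n+1)) = 2 * (2*n+1) * ((2*n).choose n) := by
        simpa [Nat.centralBinom] using h
      exact_mod_cast congrArg (Nat.cast : ℕ → ℚ) h'
    rw [ih] at key
    have hgoal : ((n:ℚ)+1) * (∑ k ∈ Finset.range (n+1+1), Fq (n+1) k)
        = ((n:ℚ)+1) * ((-1)^(n+1) * (((2*(n+1)).choose (n+1) : ℕ) : ℚ)) := by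
      have hp : ((-1:ℚ))^(n+1) = -((-1:ℚ))^n := by rw [pow_succ]; ring
      rw [hp]
      have : ((n:ℚ)+1) * (∑ k ∈ Finset.range (n+2), Fq (n+1) k)
          = -(2*(2*(n:ℚ)+1) * ((-1)^n * ((2*n).choose n : ℚ))) := by linarith [key]
      rw [this]
      rw [show ((n:ℚ)+1) * (-(-1:ℚ)^n * (((2*(n+1)).choose (n+1) : ℕ) : ℚ))
          = -((-1:ℚ)^n * (((n:ℚ)+1) * (((2*(n+1)).choose (n+1) : ℕ) : ℚ))) from by ring, hQ]
      ring
    exact mul_left_cancel₀ hn1 hgoal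

theorem paule_schneider_four (n : ℕ) :
    ∑ k ∈ Finset.range (n + 1),
      ((n.choose k : ℚ))^(4 : ℕ) * (1 + (4) * ((n : ℚ) - 2*k) * H k) =
      (-1)^n * ((2*n).choose n : ℚ) := by
  simpa only [Fq] using main_sum n
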